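/- (Simplex projection, Held et al.) Let x ∈ ℝ^m and let u be x sorted in decreasing order. Let K = max{ k ∈ {1,…,m} : (Σ_{r=1}^k u_r − 1)/k < u_k } and τ = (Σ_{k=1}^K u_k − 1)/K. Then y defined by yᵢ = max{xᵢ − τ, 0} is the Euclidean projection of x onto the unit simplex Δ^m = { z ∈ ℝ^m : zᵢ ≥ 0, Σᵢ zᵢ = 1 }, i.e., y uniquely minimizes ‖z − x‖² over z ∈ Δ^m. -/
import Mathlib


open Finset

/-- Held et al. simplex projection: sorting `x` decreasingly into `u`,
taking `K` maximal with `(Σ_{r≤K} u_r − 1)/#{r≤K} < u_K`, and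
`τ = (Σ_{r≤K} u_r − 1)/#{r≤K}`, the vector `y = max(x − τ, 0)` is the unique
Euclidean projection of `x` onto the unit simplex. -/
theorem simplex_projection
    (m : ℕ) (hm : 0 < m) (x u : Fin m → ℝ)
    (hsort : ∃ σ : Equiv.Perm (Fin m), u = x ∘ σ)
    (hdec : ∀ i j : Fin m, i ≤ j → u j ≤ u i)
    (K : Fin m)
    (hK : (∑ r ∈ Finset.Iic K, u r - 1) / ((K : ℕ) + 1) < u K)
    (hKmax : ∀ k : Fin m, (∑ r ∈ Finset.Iic k, u r - 1) / ((k : ℕ) + 1) < u k → k ≤ K)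
    (τ : ℝ) (hτ : τ = (∑ r ∈ Finset.Iic K, u r - 1) / ((K : ℕ) + 1))
    (y : Fin m → ℝ) (hy : ∀ i, y i = max (x i - τ) 0) :
    (∀ i, 0 ≤ y i) ∧ (∑ i, y i = 1) ∧
    ∀ z : Fin m → ℝ, (∀ i, 0 ≤ z i) → (∑ i, z i = 1) → z ≠ y →
      ∑ i, (y i - x i) ^ 2 < ∑ i, (z i - x i) ^ 2 := by
  obtain ⟨σ, hσ⟩ := hsort
  have hKpos : (0:ℝ) < (K:ℕ) + 1 := by positivity
  have hτK : τ * ((K:ℕ)+1) = ∑ r ∈ Finset.Iic K, u r - 1 := by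
    rw [hτ]; field_simp
  have hA : ∀ i, i ≤ K → τ < u i := fun i hi =>
    lt_of_lt_of_le (hτ ▸ hK) (hdec i K hi)
  have hB : ∀ i : Fin m, K < i → u i ≤ τ := by
    intro i hi
    have hj : (K:ℕ) + 1 < m := lt_of_le_of_lt hi i.isLt
    set j : Fin m := ⟨(K:ℕ)+1, hj⟩ with hjdef
    have hKj : K < j := by simp [Fin.lt_def, hjdef]
    have h1 : u i ≤ u j := hdec j i (by simp [Fin.le_def, hjdef]; exact hi)
    have h2 : ¬ ((∑ r ∈ Finset.Iic j, u r - 1) / ((j:ℕ)+1) < u j) := fun h =>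
      absurd (hKmax j h) (not_le.mpr hKj)
    push_neg at h2
    have hIic : Finset.Iic j = insert j (Finset.Iic K) := by
      ext r
      simp only [Finset.mem_Iic, Finset.mem_insert, Fin.le_def, Fin.ext_iff, hjdef]
      omega
    have hjnot : j ∉ Finset.Iic K := by
      simpa [Finset.mem_Iic] using not_le.mpr hKj
    rw [hIic, Finset.sum_insert hjnot] at h2
    have hjv : ((j:ℕ) : ℝ) = (K:ℕ) + 1 := by simp [hjdef]
    rw [le_div_iff₀ (by positivity)] at h2
    rw [hjv] at h2
    have huj : u j ≤ τ := by nlinarith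
    linarith
  have hynonneg : ∀ i, 0 ≤ y i := fun i => (hy i).symm ▸ le_max_right _ _
  have hcard : (Finset.Iic K).card = (K:ℕ) + 1 := Fin.card_Iic K
  have hsum : ∑ i, y i = 1 := by
    have h1 : ∑ i, y i = ∑ j, max (u j - τ) 0 := by
      rw [hσ]
      calc ∑ i, y i = ∑ i, max (x i - τ) 0 := by
            exact Finset.sum_congr rfl (fun i _ => hy i)
        _ = ∑ j, max (x (σ j) - τ) 0 := (Equiv.sum_comp σ (fun i => max (x i - τ) 0)).symm
        _ = ∑ j, max ((x ∘ σ) j - τ) 0 := rfl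
    rw [h1]
    have h2 : ∀ j : Fin m, max (u j - τ) 0 = if j ∈ Finset.Iic K then u j - τ else 0 := by
      intro j
      by_cases h : j ∈ Finset.Iic K
      · rw [if_pos h, max_eq_left]
        have := hA j (Finset.mem_Iic.mp h); linarith
      · rw [if_neg h, max_eq_right]
        have := hB j (not_le.mp (fun hle => h (Finset.mem_Iic.mpr hle)))
        linarith
    rw [Finset.sum_congr rfl (fun j _ => h2 j), Finset.sum_ite_mem, Finset.univ_inter,
      Finset.sum_sub_distrib, Finset.sum_const, hcard, nsmul_eq_mul]
    push_cast
    linarith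
  refine ⟨hynonneg, hsum, ?_⟩
  intro z hz hz1 hzy
  have hpt : ∀ i, τ * (y i - z i) ≤ (z i - y i) * (y i - x i) := by
    intro i
    rcases le_or_gt τ (x i) with h | h
    · have hyi : y i = x i - τ := by rw [hy i, max_eq_left]; linarith
      rw [hyi]; ring_nf; nlinarith [hz i]
    · have hyi : y i = 0 := by rw [hy i, max_eq_right]; linarith
      rw [hyi]; have := hz i; nlinarith
  have hsum0 : 0 ≤ ∑ i, (z i - y i) * (y i - x i) := by
    have h3 := Finset.sum_le_sum (fun i (_ : i ∈ Finset.univ) => hpt i)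
    have h4 : ∑ i, τ * (y i - z i) = 0 := by
      rw [← Finset.mul_sum, Finset.sum_sub_distrib, hsum, hz1]; ring
    linarith [h4 ▸ h3]
  obtain ⟨i0, hi0⟩ := Function.ne_iff.mp hzy
  have hpos : 0 < ∑ i, (z i - y i) ^ 2 := by
    apply Finset.sum_pos' (fun i _ => sq_nonneg _)
    exact ⟨i0, Finset.mem_univ _, by have := sub_ne_zero.mpr hi0; positivity⟩
  have hexp : ∑ i, (z i - x i) ^ 2
      = ∑ i, ((y i - x i) ^ 2 + ((z i - y i) ^ 2 + 2 * ((z i - y i) * (y i - x i)))) := by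
    exact Finset.sum_congr rfl (fun i _ => by ring)
  rw [hexp, Finset.sum_add_distrib, Finset.sum_add_distrib, ← Finset.mul_sum]
  linarith
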